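/- Let ν ∈ (0,1) and m = (m_1,…,m_h) ∈ ℝ^h with m ≠ 0, and define I_MD(x; m) := sup_{θ ∈ ℝ^h} { ⟨θ, x⟩ − (⟨θ, m⟩)^{1/ν}·1_{⟨θ,m⟩ ≥ 0} } for x ∈ ℝ^h, with values in [0, ∞]. If x = c·m for some constant c ≥ 0, then I_MD(x; m) = ( ν^{ν/(1−ν)} − ν^{1/(1−ν)} )·c^{1/(1−ν)}. -/

import Mathlib

open Matrix


lemma Mform {ν : ℝ} (hν0 : 0 < ν) (hν1 : ν < 1) :
    ν ^ (ν / (1 - ν)) - ν ^ (1 / (1 - ν)) = ν ^ (ν / (1 - ν)) * (1 - ν) := by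
  have h1ν : (0:ℝ) < 1 - ν := by linarith
  have he : (1:ℝ)/(1-ν) = ν/(1-ν) + 1 := by field_simp; ring
  rw [he, Real.rpow_add hν0, Real.rpow_one]; ring

lemma keyUB {ν c : ℝ} (hν0 : 0 < ν) (hν1 : ν < 1) (hc : 0 ≤ c) (t : ℝ) :
    c * t - (if 0 ≤ t then t ^ (1 / ν) else 0)
      ≤ (ν ^ (ν / (1 - ν)) - ν ^ (1 / (1 - ν))) * c ^ (1 / (1 - ν)) := by
  have h1ν : (0:ℝ) < 1 - ν := by linarith
  set M := (ν ^ (ν / (1 - ν)) - ν ^ (1 / (1 - ν))) * c ^ (1 / (1 - ν)) with hM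
  have hMnn : 0 ≤ M := by
    rw [hM, Mform hν0 hν1]
    exact mul_nonneg (mul_nonneg (Real.rpow_nonneg hν0.le _) h1ν.le)
      (Real.rpow_nonneg hc _)
  by_cases ht : 0 ≤ t
  · rw [if_pos ht]
    have hpq : Real.HolderConjugate (1/ν) (1/(1-ν)) := by
      rw [Real.holderConjugate_iff]
      constructor
      · rw [lt_div_iff₀ hν0]; linarith
      · field_simp; ring
    have hY := Real.young_inequality_of_nonneg
      (mul_nonneg (Real.rpow_nonneg hν0.le (-ν)) ht)
      (mul_nonneg hc (Real.rpow_nonneg hν0.le ν)) hpq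
    have hab : (ν ^ (-ν : ℝ) * t) * (c * ν ^ (ν : ℝ)) = c * t := by
      have : ν ^ (-ν : ℝ) * ν ^ (ν : ℝ) = 1 := by
        rw [← Real.rpow_add hν0]; simp
      rw [show (ν ^ (-ν:ℝ) * t) * (c * ν ^ (ν:ℝ))
          = (ν ^ (-ν:ℝ) * ν ^ (ν:ℝ)) * (c * t) by ring, this, one_mul]
    have ha : (ν ^ (-ν : ℝ) * t) ^ (1/ν) / (1/ν) = t ^ (1/ν) := by
      rw [Real.mul_rpow (Real.rpow_nonneg hν0.le _) ht, ← Real.rpow_mul hν0.le]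
      have : -ν * (1/ν) = -1 := by field_simp
      rw [this, Real.rpow_neg_one]
      field_simp
    have hb : (c * ν ^ (ν : ℝ)) ^ (1/(1-ν)) / (1/(1-ν)) = M := by
      rw [Real.mul_rpow hc (Real.rpow_nonneg hν0.le _), ← Real.rpow_mul hν0.le]
      have : ν * (1/(1-ν)) = ν/(1-ν) := by ring
      rw [this, hM, Mform hν0 hν1]
      field_simp
    rw [hab, ha, hb] at hY
    linarith
  · rw [if_neg ht]
    push_neg at ht
    have : c * t ≤ 0 := mul_nonpos_of_nonneg_of_nonpos hc ht.le
    linarith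

lemma keyEQ {ν c : ℝ} (hν0 : 0 < ν) (hν1 : ν < 1) (hc : 0 ≤ c) :
    c * (c * ν) ^ (ν / (1 - ν)) - ((c * ν) ^ (ν / (1 - ν))) ^ (1 / ν)
      = (ν ^ (ν / (1 - ν)) - ν ^ (1 / (1 - ν))) * c ^ (1 / (1 - ν)) := by
  have h1ν : (0:ℝ) < 1 - ν := by linarith
  rcases hc.eq_or_lt with hc0 | hcpos
  · subst hc0
    have ha : ν/(1-ν) ≠ 0 := by positivity
    have hb : 1/(1-ν) ≠ 0 := by positivity
    have hcν : 1/ν ≠ 0 := by positivity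
    simp only [zero_mul]
    rw [Real.zero_rpow ha, Real.zero_rpow hcν, Real.zero_rpow hb]
    ring
  · have hcν : 0 < c * ν := mul_pos hcpos hν0
    have h1 : ((c * ν) ^ (ν / (1 - ν))) ^ (1 / ν) = (c*ν) ^ (1/(1-ν)) := by
      rw [← Real.rpow_mul hcν.le]
      congr 1
      field_simp
    rw [h1, Real.mul_rpow hcpos.le hν0.le, Real.mul_rpow hcpos.le hν0.le]
    have h2 : c * c ^ (ν/(1-ν)) = c ^ (1/(1-ν)) := by
      have : (1:ℝ)/(1-ν) = 1 + ν/(1-ν) := by field_simp; ring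
      rw [this, Real.rpow_add hcpos, Real.rpow_one]
    calc c * (c ^ (ν/(1-ν)) * ν ^ (ν/(1-ν))) - c ^ (1/(1-ν)) * ν ^ (1/(1-ν))
        = (c * c ^ (ν/(1-ν))) * ν ^ (ν/(1-ν)) - c ^ (1/(1-ν)) * ν ^ (1/(1-ν)) := by ring
      _ = (ν ^ (ν / (1 - ν)) - ν ^ (1 / (1 - ν))) * c ^ (1 / (1 - ν)) := by rw [h2]; ring

/-- The moderate-deviation rate function
`I_MD(x; m) = sup_θ { ⟨θ, x⟩ − (⟨θ, m⟩)^{1/ν} 1_{⟨θ,m⟩ ≥ 0} }`, with the supremum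
taken in the extended reals. -/
noncomputable def IMD {h : ℕ} (ν : ℝ) (m x : Fin h → ℝ) : EReal :=
  ⨆ θ : Fin h → ℝ,
    ((dotProduct θ x -
      (if 0 ≤ dotProduct θ m then dotProduct θ m ^ (1 / ν) else 0) : ℝ) : EReal)

/-- If `x = c·m` for some `c ≥ 0`, then
`I_MD(x; m) = (ν^{ν/(1−ν)} − ν^{1/(1−ν)}) c^{1/(1−ν)}`. -/
theorem IMD_eq_of_proportional
    {h : ℕ} {ν : ℝ} (hν : ν ∈ Set.Ioo (0 : ℝ) 1)
    (m : Fin h → ℝ) (hm : m ≠ 0) (x : Fin h → ℝ)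
    (c : ℝ) (hc : 0 ≤ c) (hx : x = c • m) :
    IMD ν m x
      = (((ν ^ (ν / (1 - ν)) - ν ^ (1 / (1 - ν))) * c ^ (1 / (1 - ν)) : ℝ) : EReal) := by
  obtain ⟨hν0, hν1⟩ := hν
  subst hx
  apply le_antisymm
  · refine iSup_le fun θ => ?_
    rw [EReal.coe_le_coe_iff]
    have hd : dotProduct θ (c • m) = c * dotProduct θ m := by
      rw [dotProduct_smul]; exact rfl
    rw [hd]
    exact keyUB hν0 hν1 hc _
  · set t0 := (c * ν) ^ (ν / (1 - ν)) with ht0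
    have ht0nn : 0 ≤ t0 := Real.rpow_nonneg (mul_nonneg hc hν0.le) _
    have hmm : dotProduct m m ≠ 0 := fun h' => hm (dotProduct_self_eq_zero.mp h')
    set θ := (t0 / dotProduct m m) • m with hθ
    have hθm : dotProduct θ m = t0 := by
      rw [hθ, smul_dotProduct, smul_eq_mul]
      field_simp
    have hθx : dotProduct θ (c • m) = c * t0 := by
      rw [dotProduct_smul, smul_eq_mul, hθm]
    have hval : dotProduct θ (c • m) -
        (if 0 ≤ dotProduct θ m then dotProduct θ m ^ (1 / ν) else 0)
        = (ν ^ (ν / (1 - ν)) - ν ^ (1 / (1 - ν))) * c ^ (1 / (1 - ν)) := by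
      rw [hθx, hθm, if_pos ht0nn]
      exact keyEQ hν0 hν1 hc
    rw [← hval]
    exact le_iSup (fun θ' => ((dotProduct θ' (c • m) -
      (if 0 ≤ dotProduct θ' m then dotProduct θ' m ^ (1 / ν) else 0) : ℝ) : EReal)) θ
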